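/- Let W be a Coxeter group, J a subset of the simple reflections generating a finite parabolic subgroup W_J with longest element w_J. Then for every w ∈ W, the Demazure product w * w_J is the longest element of the coset w W_J, and w_J * w is the longest element of W_J w. -/

import Mathlib

variable {B W : Type*} [Group W] {M : CoxeterMatrix B}

/-- Bruhat order on a Coxeter group, via the subword property: `x ≤ w` iff some reduced word
for `w` has a subword whose product is `x`. -/
def CoxeterSystem.BruhatLE (cs : CoxeterSystem M W) (x w : W) : Prop :=
  ∃ ω : List B, cs.IsReduced ω ∧ cs.wordProd ω = w ∧
    ∃ ω' : List B, ω'.Sublist ω ∧ cs.wordProd ω' = x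

/-- `d` is the Demazure product of `u` and `v`. -/
def CoxeterSystem.IsDemazureProd (cs : CoxeterSystem M W) (u v d : W) : Prop :=
  {x : W | ∃ a b : W, cs.BruhatLE a u ∧ cs.BruhatLE b v ∧ x = a * b} =
    {x : W | cs.BruhatLE x d}

namespace DemazureAux

open List CoxeterSystem

open scoped Classical

/-! ### The eta cocycle group -/

/-- Conjugation-precomposition automorphism of `W → ZMod 2`. -/
def etaAut (W : Type*) [Group W] (x : W) : MulAut (Multiplicative (W → ZMod 2)) where
  toFun f := Multiplicative.ofAdd (fun r => Multiplicative.toAdd f (x⁻¹ * r * x))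
  invFun f := Multiplicative.ofAdd (fun r => Multiplicative.toAdd f (x * r * x⁻¹))
  left_inv f := by
    show Multiplicative.ofAdd (fun r => Multiplicative.toAdd f (x⁻¹ * (x * r * x⁻¹) * x)) = f
    have h : ∀ r : W, x⁻¹ * (x * r * x⁻¹) * x = r := fun r => by group
    simp only [h]
    rfl
  right_inv f := by
    show Multiplicative.ofAdd (fun r => Multiplicative.toAdd f (x * (x⁻¹ * r * x) * x⁻¹)) = f
    have h : ∀ r : W, x * (x⁻¹ * r * x) * x⁻¹ = r := fun r => by group
    simp only [h]
    rfl
  map_mul' f g := rfl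

lemma etaAut_apply {W : Type*} [Group W] (x : W) (f : Multiplicative (W → ZMod 2)) (r : W) :
    Multiplicative.toAdd (etaAut W x f) r = Multiplicative.toAdd f (x⁻¹ * r * x) := rfl

/-- The homomorphism `W →* MulAut (Multiplicative (W → ZMod 2))`. -/
def etaPhi (W : Type*) [Group W] : W →* MulAut (Multiplicative (W → ZMod 2)) where
  toFun := etaAut W
  map_one' := by
    apply MulEquiv.ext
    intro f
    show Multiplicative.ofAdd (fun r => Multiplicative.toAdd f (1⁻¹ * r * 1)) = f
    have h : ∀ r : W, (1 : W)⁻¹ * r * 1 = r := fun r => by group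
    simp only [h]
    rfl
  map_mul' x y := by
    apply MulEquiv.ext
    intro f
    show Multiplicative.ofAdd (fun r => Multiplicative.toAdd f ((x * y)⁻¹ * r * (x * y)))
      = etaAut W x (etaAut W y f)
    show _ = Multiplicative.ofAdd
      (fun r => Multiplicative.toAdd f (y⁻¹ * (x⁻¹ * r * x) * y))
    have h : ∀ r : W, (x * y)⁻¹ * r * (x * y) = y⁻¹ * (x⁻¹ * r * x) * y := fun r => by group
    simp only [h]

variable (cs : CoxeterSystem M W)

/-- Generators of the cocycle group. -/
noncomputable def etaGen (i : B) : (Multiplicative (W → ZMod 2)) ⋊[etaPhi W] W :=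
  ⟨Multiplicative.ofAdd (fun r => if r = cs.simple i then 1 else 0), cs.simple i⟩

lemma leftInvSeq_cons (i : B) (ω : List B) :
    cs.leftInvSeq (i :: ω) = cs.simple i :: (cs.leftInvSeq ω).map (MulAut.conj (cs.simple i)) :=
  rfl

lemma etaAut_ofAdd (x : W) (f : W → ZMod 2) :
    etaAut W x (Multiplicative.ofAdd f) = Multiplicative.ofAdd (fun r => f (x⁻¹ * r * x)) := rfl

lemma prod_etaGen (ω : List B) :
    (ω.map (etaGen cs)).prod =
      ⟨Multiplicative.ofAdd (fun r => ((cs.leftInvSeq ω).count r : ZMod 2)), cs.wordProd ω⟩ := by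
  induction ω with
  | nil =>
    apply SemidirectProduct.ext
    · show (1 : Multiplicative (W → ZMod 2)) = Multiplicative.ofAdd _
      have : cs.leftInvSeq [] = [] := rfl
      rw [this]
      rfl
    · show (1 : W) = cs.wordProd []
      rw [cs.wordProd_nil]
  | cons i ω ih =>
    rw [List.map_cons, List.prod_cons, ih]
    have hcnt : ∀ r : W, (if r = cs.simple i then (1 : ZMod 2) else 0)
        + ((cs.leftInvSeq ω).count ((cs.simple i)⁻¹ * r * cs.simple i) : ZMod 2)
        = ((cs.leftInvSeq (i :: ω)).count r : ZMod 2) := by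
      intro r
      rw [leftInvSeq_cons, List.count_cons]
      have hinj : Function.Injective (⇑(MulAut.conj (cs.simple i))) :=
        (MulAut.conj (cs.simple i)).injective
      have hr : (MulAut.conj (cs.simple i)) ((cs.simple i)⁻¹ * r * cs.simple i) = r := by
        simp [MulAut.conj_apply, mul_assoc]
      have hcount := List.count_map_of_injective (cs.leftInvSeq ω)
        (⇑(MulAut.conj (cs.simple i))) hinj ((cs.simple i)⁻¹ * r * cs.simple i)
      rw [hr] at hcount
      rw [hcount]
      push_cast
      rw [add_comm]
      congr 1
      by_cases h : cs.simple i = r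
      · rw [if_pos h.symm, if_pos (beq_iff_eq.mpr h)]
      · rw [if_neg (fun hh => h hh.symm), if_neg (fun hc => h (beq_iff_eq.mp hc))]
    apply SemidirectProduct.ext
    · rw [SemidirectProduct.mul_left]
      show Multiplicative.ofAdd (fun r => if r = cs.simple i then (1 : ZMod 2) else 0)
          * etaPhi W (cs.simple i) (Multiplicative.ofAdd _) = Multiplicative.ofAdd _
      show Multiplicative.ofAdd (fun r => if r = cs.simple i then (1 : ZMod 2) else 0)
          * etaAut W (cs.simple i) (Multiplicative.ofAdd _) = Multiplicative.ofAdd _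
      rw [etaAut_ofAdd, ← ofAdd_add]
      congr 1
      funext r
      exact hcnt r
    · rw [SemidirectProduct.mul_right]
      show cs.simple i * cs.wordProd ω = cs.wordProd (i :: ω)
      rw [cs.wordProd_cons]

/-! ### Alternating word computations -/

lemma alternatingWord_reverse (i j : B) (n : ℕ) :
    (CoxeterSystem.alternatingWord i j n).reverse =
      if Even n then CoxeterSystem.alternatingWord j i n
      else CoxeterSystem.alternatingWord i j n := by
  induction n generalizing i j with
  | zero => simp [CoxeterSystem.alternatingWord]
  | succ n ih =>
    have hrev : (CoxeterSystem.alternatingWord i j (n+1)).reverse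
        = j :: (CoxeterSystem.alternatingWord j i n).reverse := by
      rw [CoxeterSystem.alternatingWord_succ, List.concat_eq_append, List.reverse_append]
      simp
    by_cases h : Even n
    · have h1 : ¬ Even (n + 1) := by simp [Nat.even_add_one, h]
      rw [hrev, ih j i, if_pos h, if_neg h1, CoxeterSystem.alternatingWord_succ' i j n, if_pos h]
    · have h1 : Even (n + 1) := by simp [Nat.even_add_one, h]
      rw [hrev, ih j i, if_neg h, if_pos h1, CoxeterSystem.alternatingWord_succ' j i n, if_neg h]

lemma drop_one_alternatingWord (a b : B) (n : ℕ) :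
    (CoxeterSystem.alternatingWord a b n).drop 1 = CoxeterSystem.alternatingWord a b (n - 1) := by
  cases n with
  | zero => simp [CoxeterSystem.alternatingWord]
  | succ n => rw [CoxeterSystem.alternatingWord_succ']; simp

lemma drop_alternatingWord (a b : B) (d n : ℕ) :
    (CoxeterSystem.alternatingWord a b n).drop d = CoxeterSystem.alternatingWord a b (n - d) := by
  induction d generalizing n with
  | zero => simp
  | succ d ih =>
    have : (CoxeterSystem.alternatingWord a b n).drop (d + 1)
        = ((CoxeterSystem.alternatingWord a b n).drop 1).drop d := by
      rw [List.drop_drop, Nat.add_comm]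
    rw [this, drop_one_alternatingWord, ih]
    congr 1
    omega

lemma aux_conj_pow (x y : W) (hx : x * x = 1) (hy : y * y = 1) (e : ℕ) :
    y * (x * y) ^ e = ((x * y) ^ e)⁻¹ * y := by
  have hxy : y * (x * y) = (x * y)⁻¹ * y := by
    rw [mul_inv_rev]
    have hxinv : x⁻¹ = x := mul_eq_one_iff_inv_eq.mp hx
    have hyinv : y⁻¹ = y := mul_eq_one_iff_inv_eq.mp hy
    rw [hxinv, hyinv, ← mul_assoc]
  induction e with
  | zero => simp
  | succ e ih =>
    calc y * (x * y) ^ (e + 1)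
        = (y * (x * y)) * (x * y) ^ e := by rw [pow_succ', ← mul_assoc]
      _ = (x * y)⁻¹ * (y * (x * y) ^ e) := by rw [hxy, mul_assoc]
      _ = (x * y)⁻¹ * (((x * y) ^ e)⁻¹ * y) := by rw [ih]
      _ = ((x * y) ^ e * (x * y))⁻¹ * y := by rw [mul_inv_rev ((x * y) ^ e) (x * y), mul_assoc]
      _ = ((x * y) ^ (e + 1))⁻¹ * y := by rw [pow_succ]

lemma dihedral_conj_even (x y c : W) (hc : y * c = c⁻¹ * y) :
    c⁻¹ * y * c = (c * c)⁻¹ * y := by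
  calc c⁻¹ * y * c = c⁻¹ * (y * c) := by group
    _ = c⁻¹ * (c⁻¹ * y) := by rw [hc]
    _ = (c * c)⁻¹ * y := by group

lemma dihedral_conj_odd (x y c : W) (hc : y * c = c⁻¹ * y) (hyinv : y⁻¹ = y)
    (hyx : y * x = (x * y)⁻¹) :
    (y * c)⁻¹ * x * (y * c) = (c * (x * y) * c)⁻¹ * y := by
  have h1 : (y * c)⁻¹ = c⁻¹ * y := by rw [mul_inv_rev, hyinv]
  calc (y * c)⁻¹ * x * (y * c) = (c⁻¹ * y) * x * (y * c) := by rw [h1]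
    _ = c⁻¹ * ((y * x) * (y * c)) := by group
    _ = c⁻¹ * ((x * y)⁻¹ * (y * c)) := by rw [hyx]
    _ = c⁻¹ * ((x * y)⁻¹ * (c⁻¹ * y)) := by rw [hc]
    _ = (c * (x * y) * c)⁻¹ * y := by group

lemma getD_ris_alternatingWord (a b : B) (n k : ℕ) (hk : k < n) :
    (cs.rightInvSeq (CoxeterSystem.alternatingWord a b n)).getD k 1
      = ((cs.simple a * cs.simple b) ^ (n - k - 1))⁻¹ * cs.simple b := by
  rw [cs.getD_rightInvSeq]
  have hdrop : (CoxeterSystem.alternatingWord a b n).drop (k + 1)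
      = CoxeterSystem.alternatingWord a b (n - k - 1) := by
    rw [drop_alternatingWord, Nat.sub_sub]
  set q := n - k - 1 with hq
  have hget : (CoxeterSystem.alternatingWord a b n)[k]?
      = some (if Even q then b else a) := by
    have h1 : (CoxeterSystem.alternatingWord a b n).drop k
        = CoxeterSystem.alternatingWord a b (q + 1) := by
      rw [drop_alternatingWord]; congr 1; omega
    have h2 : (CoxeterSystem.alternatingWord a b n)[k]?
        = ((CoxeterSystem.alternatingWord a b n).drop k)[0]? := by
      rw [List.getElem?_drop, Nat.add_zero]
    rw [h2, h1, CoxeterSystem.alternatingWord_succ']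
    rfl
  rw [hdrop, hget]
  set z := cs.simple a * cs.simple b with hz
  have hxx : cs.simple a * cs.simple a = 1 := cs.simple_mul_simple_self a
  have hyy : cs.simple b * cs.simple b = 1 := cs.simple_mul_simple_self b
  rw [cs.prod_alternatingWord_eq_mul_pow]
  have hyinv : (cs.simple b)⁻¹ = cs.simple b := cs.inv_simple b
  have hc : cs.simple b * z ^ (q / 2) = (z ^ (q / 2))⁻¹ * cs.simple b := by
    rw [hz]; exact aux_conj_pow _ _ hxx hyy _
  by_cases hev : Even q
  · have h2e : q / 2 + q / 2 = q := by
      rw [Nat.even_iff] at hev; omega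
    rw [if_pos hev, if_pos hev, one_mul]
    simp only [Option.map_some, Option.getD_some]
    rw [← hz]
    rw [dihedral_conj_even (cs.simple a) (cs.simple b) (z ^ (q / 2)) hc]
    rw [← pow_add, h2e]
  · have h2e : q / 2 + 1 + q / 2 = q := by
      rw [Nat.even_iff] at hev; omega
    rw [if_neg hev, if_neg hev]
    simp only [Option.map_some, Option.getD_some]
    rw [← hz]
    have hyx : cs.simple b * cs.simple a = (cs.simple a * cs.simple b)⁻¹ := by
      rw [mul_inv_rev, hyinv, cs.inv_simple a]
    rw [show cs.simple a * cs.simple b = z from hz.symm] at hyx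
    rw [dihedral_conj_odd (cs.simple a) (cs.simple b) (z ^ (q / 2)) hc hyinv hyx]
    have hez : z ^ (q / 2) * z * z ^ (q / 2) = z ^ q := by
      rw [← pow_succ, ← pow_add]
      congr 1 <;> omega
    rw [hez]

lemma count_ris_alternatingWord_even (a b : B) (r : W) :
    Even ((cs.rightInvSeq (CoxeterSystem.alternatingWord a b (2 * M a b))).count r) := by
  set m := M a b with hm
  rcases Nat.eq_zero_or_pos m with h0 | hpos
  · rw [h0]
    simp [CoxeterSystem.alternatingWord]
  set ω := CoxeterSystem.alternatingWord a b (2 * m) with hω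
  set l := cs.rightInvSeq ω with hl
  have hlen : l.length = 2 * m := by
    rw [hl, cs.length_rightInvSeq, hω, CoxeterSystem.length_alternatingWord]
  have hzm : (cs.simple a * cs.simple b) ^ m = 1 := cs.simple_mul_simple_pow a b
  have hpair : ∀ k, k < m → l.getD k 1 = l.getD (k + m) 1 := by
    intro k hk
    rw [hl, hω, getD_ris_alternatingWord cs a b _ k (by omega),
      getD_ris_alternatingWord cs a b _ (k + m) (by omega)]
    congr 2
    have : 2 * m - k - 1 = (2 * m - (k + m) - 1) + m := by omega
    rw [this, pow_add, hzm, mul_one]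
  have htake : l.take m = l.drop m := by
    apply List.ext_getElem
    · rw [List.length_take, List.length_drop, hlen]
      omega
    · intro k h1 h2
      have hk : k < m := by
        rw [List.length_take, hlen] at h1
        omega
      rw [List.getElem_take, List.getElem_drop]
      rw [← List.getD_eq_getElem l 1, ← List.getD_eq_getElem l 1]
      rw [Nat.add_comm m k]
      exact hpair k hk
  have hsplit : l = l.take m ++ l.drop m := (List.take_append_drop m l).symm
  rw [hsplit, List.count_append, htake]
  exact ⟨(l.drop m).count r, by omega⟩

lemma eta_liftable : M.IsLiftable (etaGen cs) := by
  intro i j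
  have hpow : ∀ m : ℕ, (etaGen cs i * etaGen cs j) ^ m
      = ((CoxeterSystem.alternatingWord i j (2 * m)).map (etaGen cs)).prod := by
    intro m
    induction m with
    | zero => simp [CoxeterSystem.alternatingWord]
    | succ m ih =>
      have hcons : CoxeterSystem.alternatingWord i j (2 * (m + 1))
          = i :: j :: CoxeterSystem.alternatingWord i j (2 * m) := by
        have h1 : 2 * (m + 1) = (2 * m + 1) + 1 := by ring
        rw [h1, CoxeterSystem.alternatingWord_succ' i j (2*m+1),
          CoxeterSystem.alternatingWord_succ' i j (2*m)]
        have he : ¬ Even (2 * m + 1) := by simp [Nat.even_add_one, even_two_mul]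
        rw [if_neg he, if_pos (even_two_mul m)]
      rw [pow_succ', ih, hcons, List.map_cons, List.map_cons, List.prod_cons, List.prod_cons,
        ← mul_assoc]
  rw [hpow, prod_etaGen]
  apply SemidirectProduct.ext
  · show Multiplicative.ofAdd _ = (1 : (Multiplicative (W → ZMod 2)) ⋊[etaPhi W] W).left
    rw [SemidirectProduct.one_left]
    have hcount : ∀ r : W,
        (((cs.leftInvSeq (CoxeterSystem.alternatingWord i j (2 * M i j))).count r : ZMod 2)) = 0 := by
      intro r
      have hrev : CoxeterSystem.alternatingWord i j (2 * M i j)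
          = (CoxeterSystem.alternatingWord j i (2 * M i j)).reverse := by
        rw [alternatingWord_reverse, if_pos (even_two_mul _)]
      rw [hrev, cs.leftInvSeq_reverse, List.count_reverse]
      have hsym : M i j = M j i := M.symmetric i j
      rw [hsym]
      obtain ⟨c, hc⟩ := count_ris_alternatingWord_even cs j i r
      rw [hc]
      push_cast
      rw [show ((c : ZMod 2) + c) = 2 * c by ring, show (2 : ZMod 2) = 0 from rfl, zero_mul]
    show Multiplicative.ofAdd (fun r => ((cs.leftInvSeq _).count r : ZMod 2)) = _
    simp only [hcount]
    rfl
  · show cs.wordProd _ = (1 : (Multiplicative (W → ZMod 2)) ⋊[etaPhi W] W).right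
    rw [SemidirectProduct.one_right, cs.prod_alternatingWord_eq_mul_pow,
      if_pos (even_two_mul _), one_mul]
    have : 2 * M i j / 2 = M i j := by omega
    rw [this, cs.simple_mul_simple_pow]

/-! ### The eta function and strong exchange -/

/-- The cocycle homomorphism. -/
noncomputable def etaHom : W →* (Multiplicative (W → ZMod 2)) ⋊[etaPhi W] W :=
  cs.lift ⟨etaGen cs, eta_liftable cs⟩

/-- `eta cs w t` counts (mod 2) the multiplicity of `t` in the left inversion sequence of any
word for `w`. -/
noncomputable def eta (w r : W) : ZMod 2 :=
  Multiplicative.toAdd ((etaHom cs w).left) r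

lemma etaHom_wordProd (ω : List B) :
    etaHom cs (cs.wordProd ω) = (ω.map (etaGen cs)).prod := by
  induction ω with
  | nil => simp [cs.wordProd_nil]
  | cons i ω ih =>
    rw [cs.wordProd_cons, map_mul, ih, List.map_cons, List.prod_cons]
    congr 1
    exact cs.lift_apply_simple (eta_liftable cs) i

lemma eta_wordProd (ω : List B) (r : W) :
    eta cs (cs.wordProd ω) r = ((cs.leftInvSeq ω).count r : ZMod 2) := by
  unfold eta
  rw [etaHom_wordProd, prod_etaGen]
  rfl

lemma etaHom_right (w : W) : (etaHom cs w).right = w := by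
  have h : (SemidirectProduct.rightHom).comp (etaHom cs) = MonoidHom.id W := by
    apply cs.ext_simple
    intro i
    simp only [MonoidHom.comp_apply, MonoidHom.id_apply]
    unfold etaHom
    rw [cs.lift_apply_simple (eta_liftable cs) i]
    rfl
  exact DFunLike.congr_fun h w

lemma eta_mul (x y r : W) : eta cs (x * y) r = eta cs x r + eta cs y (x⁻¹ * r * x) := by
  unfold eta
  rw [map_mul, SemidirectProduct.mul_left, etaHom_right]
  rfl

lemma eta_one (r : W) : eta cs 1 r = 0 := by
  unfold eta
  rw [map_one]
  rfl

lemma zmod2_cancel : ∀ a b : ZMod 2, a + b = 0 → b = a := by decide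

lemma eta_inv (x r : W) : eta cs x⁻¹ (x⁻¹ * r * x) = eta cs x r := by
  have h := eta_mul cs x x⁻¹ r
  rw [mul_inv_cancel, eta_one] at h
  exact zmod2_cancel _ _ h.symm

lemma eta_simple_self (i : B) : eta cs (cs.simple i) (cs.simple i) = 1 := by
  have h := eta_wordProd cs [i] (cs.simple i)
  rw [cs.wordProd_singleton] at h
  rw [h, leftInvSeq_cons]
  simp [CoxeterSystem.leftInvSeq]

lemma eta_self {t : W} (ht : cs.IsReflection t) : eta cs t t = 1 := by
  obtain ⟨u, i, rfl⟩ := ht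
  set t := u * cs.simple i * u⁻¹ with hts
  have h1 : t = u * (cs.simple i * u⁻¹) := by rw [hts]; group
  have h2 : u⁻¹ * t * u = cs.simple i := by rw [hts]; group
  rw [h1, eta_mul, ← h1, h2, eta_mul]
  have h3 : (cs.simple i)⁻¹ * cs.simple i * cs.simple i = cs.simple i := by group
  rw [h3, eta_simple_self]
  have h4 : eta cs u⁻¹ (cs.simple i) = eta cs u t := by
    have := eta_inv cs u (u * cs.simple i * u⁻¹)
    have h5 : u⁻¹ * (u * cs.simple i * u⁻¹) * u = cs.simple i := by group
    rw [h5] at this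
    rw [this, hts]
  rw [h4]
  generalize eta cs u t = c
  revert c
  decide

lemma eta_eq_one_of_left_lt {t w : W} (ht : cs.IsReflection t)
    (h : cs.length (t * w) < cs.length w) : eta cs w t = 1 := by
  by_contra h0
  have h0' : eta cs w t = 0 := by
    revert h0; generalize eta cs w t = c; revert c; decide
  have h1 : eta cs (t * w) t = 1 := by
    rw [eta_mul]
    have : t⁻¹ * t * t = t := by group
    rw [this, eta_self cs ht, h0', add_zero]
  obtain ⟨τ, hτred, hτ⟩ := cs.exists_reduced_word' (t * w)
  rw [hτ] at h1
  rw [eta_wordProd] at h1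
  have hmem : t ∈ cs.leftInvSeq τ := by
    rw [← List.count_pos_iff]
    by_contra hc
    push_neg at hc
    have h0 : (cs.leftInvSeq τ).count t = 0 := by omega
    rw [h0] at h1
    simp at h1
  have hinv := cs.isLeftInversion_of_mem_leftInvSeq hτred hmem
  have h3 : cs.length (t * cs.wordProd τ) < cs.length (cs.wordProd τ) := hinv.2
  rw [← hτ] at h3
  have h2 : t * (t * w) = w := by
    rw [← mul_assoc, ht.mul_self, one_mul]
  rw [h2] at h3
  omega

lemma strong_exchange_left (ω : List B) {t : W} (ht : cs.IsReflection t)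
    (h : cs.length (t * cs.wordProd ω) < cs.length (cs.wordProd ω)) :
    ∃ j, j < ω.length ∧ t * cs.wordProd ω = cs.wordProd (ω.eraseIdx j) := by
  have h1 : eta cs (cs.wordProd ω) t = 1 := eta_eq_one_of_left_lt cs ht h
  rw [eta_wordProd] at h1
  have hmem : t ∈ cs.leftInvSeq ω := by
    rw [← List.count_pos_iff]
    by_contra hc
    push_neg at hc
    have h0 : (cs.leftInvSeq ω).count t = 0 := by omega
    rw [h0] at h1
    simp at h1
  obtain ⟨j, hj, hjt⟩ := List.mem_iff_getElem.mp hmem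
  refine ⟨j, by simpa using hj, ?_⟩
  rw [show t = (cs.leftInvSeq ω).getD j 1 by rw [List.getD_eq_getElem _ 1 hj, hjt]]
  exact cs.getD_leftInvSeq_mul_wordProd ω j

lemma strong_exchange_right (ω : List B) {t : W} (ht : cs.IsReflection t)
    (h : cs.length (cs.wordProd ω * t) < cs.length (cs.wordProd ω)) :
    ∃ σ, σ.Sublist ω ∧ σ.length + 1 = ω.length ∧ cs.wordProd σ = cs.wordProd ω * t := by
  have hrev : cs.length (t * cs.wordProd ω.reverse) < cs.length (cs.wordProd ω.reverse) := by
    rw [cs.wordProd_reverse]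
    have h1 : t * (cs.wordProd ω)⁻¹ = (cs.wordProd ω * t)⁻¹ := by
      rw [mul_inv_rev, ht.inv]
    rw [h1, cs.length_inv, cs.length_inv]
    exact h
  obtain ⟨j, hj, hjeq⟩ := strong_exchange_left cs ω.reverse ht hrev
  refine ⟨(ω.reverse.eraseIdx j).reverse, ?_, ?_, ?_⟩
  · have := (List.eraseIdx_sublist ω.reverse j).reverse
    rwa [List.reverse_reverse] at this
  · rw [List.length_reverse, List.length_eraseIdx]
    rw [List.length_reverse] at hj ⊢
    rw [if_pos hj]
    omega
  · rw [cs.wordProd_reverse, ← hjeq, mul_inv_rev, cs.wordProd_reverse, inv_inv, ht.inv]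

/-! ### Deletion, reduction -/

lemma exists_shorter_word (ω : List B) (hnr : ¬ cs.IsReduced ω) :
    ∃ σ, σ.Sublist ω ∧ σ.length < ω.length ∧ cs.wordProd σ = cs.wordProd ω := by
  have hne : ω ≠ [] := by
    rintro rfl
    exact hnr (by simp [CoxeterSystem.IsReduced])
  have hex : ∃ k, ¬ cs.IsReduced (ω.take (k + 1)) := by
    refine ⟨ω.length - 1, ?_⟩
    have : ω.length - 1 + 1 = ω.length := by
      have := List.length_pos_iff.mpr hne
      omega
    rwa [this, List.take_length]
  classical
  let k₀ := Nat.find hex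
  have hk₀ : ¬ cs.IsReduced (ω.take (k₀ + 1)) := Nat.find_spec hex
  have hk₀min : ∀ j, j < k₀ → cs.IsReduced (ω.take (j + 1)) := fun j hj => by
    have := Nat.find_min hex hj
    simpa using this
  have hk₀lt : k₀ < ω.length := by
    have h1 : k₀ ≤ ω.length - 1 := Nat.find_le (by
      have : ω.length - 1 + 1 = ω.length := by
        have := List.length_pos_iff.mpr hne
        omega
      rwa [this, List.take_length])
    have := List.length_pos_iff.mpr hne
    omega
  have hαred : cs.IsReduced (ω.take k₀) := by
    rcases Nat.eq_zero_or_pos k₀ with h0 | hpos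
    · rw [h0]
      simp [CoxeterSystem.IsReduced]
    · have h1 := hk₀min (k₀ - 1) (by omega)
      have heq : k₀ - 1 + 1 = k₀ := by omega
      rwa [heq] at h1
  set α := ω.take k₀ with hα
  set i := ω.get ⟨k₀, hk₀lt⟩ with hi
  have htake : ω.take (k₀ + 1) = α ++ [i] := by
    rw [hα, hi, List.take_succ, List.getElem?_eq_getElem hk₀lt]
    rfl
  have hαlen : α.length = k₀ := by
    rw [hα, List.length_take]
    omega
  have hlt : cs.length (cs.wordProd α * cs.simple i) < cs.length (cs.wordProd α) := by
    have hna : ¬ cs.IsReduced (α ++ [i]) := htake ▸ hk₀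
    have hπ : cs.wordProd (α ++ [i]) = cs.wordProd α * cs.simple i := by
      rw [cs.wordProd_append, cs.wordProd_singleton]
    have hlen : (α ++ [i]).length = k₀ + 1 := by simp [hαlen]
    have h1 : cs.length (cs.wordProd α * cs.simple i) ≠ k₀ + 1 := by
      intro hc
      exact hna (by rw [CoxeterSystem.IsReduced, hπ, hlen, hc])
    have h2 : cs.length (cs.wordProd α) = k₀ := by
      rw [hαred]  -- IsReduced means ℓ (π α) = α.length
      exact hαlen
    rcases cs.length_mul_simple (cs.wordProd α) i with h3 | h3
    · omega
    · omega
  obtain ⟨σ₁, hσ₁sub, hσ₁len, hσ₁π⟩ :=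
    strong_exchange_right cs α (cs.isReflection_simple i) hlt
  refine ⟨σ₁ ++ ω.drop (k₀ + 1), ?_, ?_, ?_⟩
  · have h1 : σ₁ ++ ω.drop (k₀ + 1) <+ (α ++ [i]) ++ ω.drop (k₀ + 1) :=
      List.Sublist.append (hσ₁sub.trans (List.sublist_append_left α [i])) (List.Sublist.refl _)
    rwa [← htake, List.take_append_drop] at h1
  · rw [List.length_append, List.length_drop]
    omega
  · rw [cs.wordProd_append, hσ₁π]
    conv_rhs => rw [← List.take_append_drop (k₀ + 1) ω]
    rw [cs.wordProd_append, htake, cs.wordProd_append, cs.wordProd_singleton]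

lemma exists_reduced_sublist (ω : List B) :
    ∃ τ, τ.Sublist ω ∧ cs.IsReduced τ ∧ cs.wordProd τ = cs.wordProd ω := by
  have H : ∀ n (ω : List B), ω.length ≤ n →
      ∃ τ, τ.Sublist ω ∧ cs.IsReduced τ ∧ cs.wordProd τ = cs.wordProd ω := by
    intro n
    induction n with
    | zero =>
      intro ω hω
      have : ω = [] := List.eq_nil_of_length_eq_zero (by omega)
      subst this
      exact ⟨[], List.Sublist.refl _, by simp [CoxeterSystem.IsReduced], rfl⟩
    | succ n ih =>
      intro ω hω
      by_cases hred : cs.IsReduced ω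
      · exact ⟨ω, List.Sublist.refl _, hred, rfl⟩
      · obtain ⟨σ, hsub, hlen, hπ⟩ := exists_shorter_word cs ω hred
        obtain ⟨τ, hτsub, hτred, hτπ⟩ := ih σ (by omega)
        exact ⟨τ, hτsub.trans hsub, hτred, by rw [hτπ, hπ]⟩
  exact H ω.length ω le_rfl

/-! ### The reflection order -/

/-- One step down in the Bruhat order: multiply by a reflection on the right,
decreasing length. -/
def DStep (a b : W) : Prop :=
  (∃ t, cs.IsReflection t ∧ b = a * t) ∧ cs.length b < cs.length a

/-- Bruhat order via chains of reflections. -/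
def Rle (x w : W) : Prop := Relation.ReflTransGen (DStep cs) w x

lemma Rle.refl (x : W) : Rle cs x x := Relation.ReflTransGen.refl

lemma Rle.trans {cs' : CoxeterSystem M W} {x y z : W} (h1 : Rle cs' x y)
    (h2 : Rle cs' y z) : Rle cs' x z :=
  Relation.ReflTransGen.trans h2 h1

lemma rle_of_dstep {a b : W} (h : DStep cs a b) : Rle cs b a :=
  Relation.ReflTransGen.single h

lemma rle_word (x w : W) (h : Rle cs x w) :
    ∀ σ : List B, cs.wordProd σ = w → ∃ τ, τ.Sublist σ ∧ cs.wordProd τ = x := by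
  unfold Rle at h
  induction h using Relation.ReflTransGen.head_induction_on with
  | refl => exact fun σ hσ => ⟨σ, List.Sublist.refl _, hσ⟩
  | head hstep _ ih =>
    rename_i a c _
    intro σ hσ
    obtain ⟨⟨t, ht, rfl⟩, hlt⟩ := hstep
    have h1 : cs.length (cs.wordProd σ * t) < cs.length (cs.wordProd σ) := by
      rw [hσ]; exact hlt
    obtain ⟨σ₁, hσ₁sub, _, hσ₁π⟩ := strong_exchange_right cs σ ht h1
    obtain ⟨τ, hτsub, hτπ⟩ := ih σ₁ (by rw [hσ₁π, hσ])
    exact ⟨τ, hτsub.trans hσ₁sub, hτπ⟩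

lemma bruhatLE_of_rle {x w : W} (h : Rle cs x w) : cs.BruhatLE x w := by
  obtain ⟨ω, hred, hπ⟩ := cs.exists_reduced_word' w
  obtain ⟨τ, hsub, hτ⟩ := rle_word cs x w h ω hπ.symm
  exact ⟨ω, hred, hπ.symm, τ, hsub, hτ⟩

/-! ### Lifting lemmas -/

lemma dstep_simple {w : W} (i : B) (h : cs.length (w * cs.simple i) < cs.length w) :
    DStep cs w (w * cs.simple i) :=
  ⟨⟨cs.simple i, cs.isReflection_simple i, rfl⟩, h⟩

lemma sublist_concat_cases {α : Type*} (σ l : List α) (i : α) (h : σ <+ l ++ [i]) :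
    σ <+ l ∨ ∃ β, σ = β ++ [i] ∧ β <+ l := by
  have h1 : σ.reverse <+ i :: l.reverse := by
    have := h.reverse
    rwa [List.reverse_append, List.reverse_singleton] at this
  rcases List.sublist_cons_iff.mp h1 with h2 | ⟨r, hr, hrs⟩
  · left
    have := h2.reverse
    rwa [List.reverse_reverse, List.reverse_reverse] at this
  · right
    refine ⟨r.reverse, ?_, ?_⟩
    · rw [← List.reverse_reverse σ, hr]
      simp
    · have := hrs.reverse
      rwa [List.reverse_reverse] at this

lemma bsingle {w u : W} (i : B) (hstep : DStep cs w u)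
    (hdesc : cs.length (w * cs.simple i) < cs.length w) :
    Rle cs (u * cs.simple i) w := by
  obtain ⟨⟨t, ht, rfl⟩, hlt⟩ := hstep
  have hws : cs.length (w * cs.simple i) + 1 = cs.length w := by
    rcases cs.length_mul_simple w i with h | h <;> omega
  obtain ⟨τ, hτred, hτ⟩ := cs.exists_reduced_word' (w * cs.simple i)
  have hπω : cs.wordProd (τ ++ [i]) = w := by
    rw [cs.wordProd_append, cs.wordProd_singleton, ← hτ, mul_assoc,
      cs.simple_mul_simple_self, mul_one]
  have hlen : cs.length (cs.wordProd (τ ++ [i]) * t) < cs.length (cs.wordProd (τ ++ [i])) := by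
    rw [hπω]; exact hlt
  obtain ⟨σ, hσsub, hσlen, hσπ⟩ := strong_exchange_right cs (τ ++ [i]) ht hlen
  rw [hπω] at hσπ
  have hτlen : τ.length = cs.length (w * cs.simple i) := by
    rw [hτ]; exact hτred.symm
  rcases sublist_concat_cases σ τ i hσsub with hcase | ⟨β, rfl, hβ⟩
  · have hσeq : σ = τ := hcase.eq_of_length (by simp at hσlen; omega)
    rw [hσeq, ← hτ] at hσπ
    have : w * t * cs.simple i = w := by
      rw [hσπ.symm, mul_assoc, cs.simple_mul_simple_self, mul_one]
    rw [this]
    exact Rle.refl cs w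
  · have hβπ : cs.wordProd β * cs.simple i = w * t := by
      rw [← cs.wordProd_singleton, ← cs.wordProd_append]
      exact hσπ
    have hβlen : β.length + 1 = τ.length := by
      simp at hσlen
      omega
    have hgoal : w * t * cs.simple i = cs.wordProd β := by
      rw [← hβπ, mul_assoc, cs.simple_mul_simple_self, mul_one]
    rw [hgoal]
    have hlenβ : cs.length (cs.wordProd β) < cs.length (w * cs.simple i) := by
      calc cs.length (cs.wordProd β) ≤ β.length := cs.length_wordProd_le β
        _ < τ.length := by omega
        _ = cs.length (w * cs.simple i) := hτlen
    have hstep2 : DStep cs (w * cs.simple i) (cs.wordProd β) := by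
      refine ⟨⟨cs.simple i * t * cs.simple i, ?_, ?_⟩, hlenβ⟩
      · have := ht.conj (cs.simple i)
        rwa [cs.inv_simple] at this
      · rw [← hgoal]
        calc w * t * cs.simple i
            = w * (cs.simple i * cs.simple i) * t * cs.simple i := by
              rw [cs.simple_mul_simple_self, mul_one]
          _ = w * cs.simple i * (cs.simple i * t * cs.simple i) := by group
    exact (rle_of_dstep cs hstep2).trans (rle_of_dstep cs (dstep_simple cs i hdesc))

lemma lift_BC : ∀ n : ℕ,
    (∀ w u : W, ∀ i : B, cs.length w ≤ n → cs.length (w * cs.simple i) < cs.length w →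
      Rle cs u w → Rle cs (u * cs.simple i) w) ∧
    (∀ v u : W, ∀ i : B, cs.length v ≤ n → cs.length v < cs.length (v * cs.simple i) →
      Rle cs u v → Rle cs (u * cs.simple i) (v * cs.simple i)) := by
  intro n
  induction n using Nat.strong_induction_on with
  | _ n IH =>
  constructor
  · intro w u i hn hdesc hru
    rcases Relation.ReflTransGen.cases_head hru with heq | ⟨u₁, hstep, hchain⟩
    · rw [← heq]
      exact rle_of_dstep cs (dstep_simple cs i hdesc)
    · have hlu₁ : cs.length u₁ < cs.length w := hstep.2
      rcases Nat.lt_or_ge (cs.length (u₁ * cs.simple i)) (cs.length u₁) with hlt | hge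
      · have h1 : Rle cs (u * cs.simple i) u₁ :=
          (IH (cs.length u₁) (by omega)).1 u₁ u i le_rfl hlt hchain
        exact h1.trans (rle_of_dstep cs hstep)
      · have hgt : cs.length u₁ < cs.length (u₁ * cs.simple i) :=
          lt_of_le_of_ne hge (Ne.symm (cs.length_mul_simple_ne u₁ i))
        have h1 : Rle cs (u * cs.simple i) (u₁ * cs.simple i) :=
          (IH (cs.length u₁) (by omega)).2 u₁ u i le_rfl hgt hchain
        exact h1.trans (bsingle cs i hstep hdesc)
  · intro v u i hn hasc hru
    rcases Relation.ReflTransGen.cases_head hru with heq | ⟨u₁, hstep, hchain⟩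
    · rw [← heq]
      exact Rle.refl cs _
    · have hlu₁ : cs.length u₁ < cs.length v := hstep.2
      rcases Nat.lt_or_ge (cs.length (u₁ * cs.simple i)) (cs.length u₁) with hlt | hge
      · have h1 : Rle cs (u * cs.simple i) u₁ :=
          (IH (cs.length u₁) (by omega)).1 u₁ u i le_rfl hlt hchain
        have h2 : DStep cs (v * cs.simple i) v := by
          refine ⟨⟨cs.simple i, cs.isReflection_simple i, ?_⟩, hasc⟩
          rw [mul_assoc, cs.simple_mul_simple_self, mul_one]
        exact h1.trans ((rle_of_dstep cs hstep).trans (rle_of_dstep cs h2))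
      · have hgt : cs.length u₁ < cs.length (u₁ * cs.simple i) :=
          lt_of_le_of_ne hge (Ne.symm (cs.length_mul_simple_ne u₁ i))
        have h1 : Rle cs (u * cs.simple i) (u₁ * cs.simple i) :=
          (IH (cs.length u₁) (by omega)).2 u₁ u i le_rfl hgt hchain
        obtain ⟨⟨t, ht, htu⟩, _⟩ := hstep
        have hu₁si : u₁ * cs.simple i = (v * cs.simple i) * (cs.simple i * t * cs.simple i) := by
          rw [htu]
          calc v * t * cs.simple i
              = v * (cs.simple i * cs.simple i) * t * cs.simple i := by
                rw [cs.simple_mul_simple_self, mul_one]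
            _ = v * cs.simple i * (cs.simple i * t * cs.simple i) := by group
        have h2 : DStep cs (v * cs.simple i) (u₁ * cs.simple i) := by
          refine ⟨⟨cs.simple i * t * cs.simple i, ?_, hu₁si⟩, ?_⟩
          · have := ht.conj (cs.simple i)
            rwa [cs.inv_simple] at this
          · have ha : cs.length (u₁ * cs.simple i) = cs.length u₁ + 1 := by
              rcases cs.length_mul_simple u₁ i with h | h <;> omega
            have hb : cs.length (v * cs.simple i) = cs.length v + 1 := by
              rcases cs.length_mul_simple v i with h | h <;> omega
            omega
        exact h1.trans (rle_of_dstep cs h2)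

lemma lift_desc {w u : W} (i : B) (hdesc : cs.length (w * cs.simple i) < cs.length w)
    (h : Rle cs u w) : Rle cs (u * cs.simple i) w :=
  (lift_BC cs (cs.length w)).1 w u i le_rfl hdesc h

lemma lift_asc {v u : W} (i : B) (hasc : cs.length v < cs.length (v * cs.simple i))
    (h : Rle cs u v) : Rle cs (u * cs.simple i) (v * cs.simple i) :=
  (lift_BC cs (cs.length v)).2 v u i le_rfl hasc h

lemma rle_of_sublist_reduced {ω σ : List B} (hred : cs.IsReduced ω) (hsub : σ <+ ω) :
    Rle cs (cs.wordProd σ) (cs.wordProd ω) := by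
  induction ω using List.reverseRecOn generalizing σ with
  | nil =>
    rw [List.sublist_nil.mp hsub]
    exact Rle.refl cs _
  | append_singleton α i ih =>
    have hπ : cs.wordProd (α ++ [i]) = cs.wordProd α * cs.simple i := by
      rw [cs.wordProd_append, cs.wordProd_singleton]
    have hαred : cs.IsReduced α := by
      rcases Nat.lt_or_ge (cs.length (cs.wordProd α)) α.length with hlt | hge
      · exfalso
        have h1 : cs.length (cs.wordProd (α ++ [i])) ≤ cs.length (cs.wordProd α) + 1 := by
          rw [hπ]
          rcases cs.length_mul_simple (cs.wordProd α) i with h | h <;> omega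
        have h2 : cs.length (cs.wordProd (α ++ [i])) = (α ++ [i]).length := hred
        simp at h2
        omega
      · exact le_antisymm (cs.length_wordProd_le α) hge
    have hasc : cs.length (cs.wordProd α) < cs.length (cs.wordProd α * cs.simple i) := by
      have h2 : cs.length (cs.wordProd (α ++ [i])) = (α ++ [i]).length := hred
      rw [hπ] at h2
      simp at h2
      have h3 : cs.length (cs.wordProd α) = α.length := hαred
      omega
    rcases sublist_concat_cases σ α i hsub with hcase | ⟨β, rfl, hβ⟩
    · have h1 : Rle cs (cs.wordProd σ) (cs.wordProd α) := ih hαred hcase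
      have h2 : DStep cs (cs.wordProd (α ++ [i])) (cs.wordProd α) := by
        refine ⟨⟨cs.simple i, cs.isReflection_simple i, ?_⟩, ?_⟩
        · rw [hπ, mul_assoc, cs.simple_mul_simple_self, mul_one]
        · rw [hπ]; exact hasc
      exact h1.trans (rle_of_dstep cs h2)
    · have h1 : Rle cs (cs.wordProd β) (cs.wordProd α) := ih hαred hβ
      have h2 := lift_asc cs i hasc h1
      rw [hπ, cs.wordProd_append, cs.wordProd_singleton]
      exact h2

lemma rle_of_bruhatLE {x w : W} (h : cs.BruhatLE x w) : Rle cs x w := by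
  obtain ⟨ω, hred, hπ, τ, hsub, hτ⟩ := h
  rw [← hπ, ← hτ]
  exact rle_of_sublist_reduced cs hred hsub

/-! ### Basic properties of BruhatLE -/

lemma bruhatLE_refl (w : W) : cs.BruhatLE w w := by
  obtain ⟨ω, hred, hπ⟩ := cs.exists_reduced_word' w
  exact ⟨ω, hred, hπ.symm, ω, List.Sublist.refl _, hπ.symm⟩

lemma bruhatLE_length_le {x w : W} (h : cs.BruhatLE x w) : cs.length x ≤ cs.length w := by
  obtain ⟨ω, hred, hπ, τ, hsub, hτ⟩ := h
  calc cs.length x = cs.length (cs.wordProd τ) := by rw [hτ]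
    _ ≤ τ.length := cs.length_wordProd_le τ
    _ ≤ ω.length := hsub.length_le
    _ = cs.length w := by rw [← hπ]; exact hred.symm

lemma bruhatLE_eq_of_length {x w : W} (h : cs.BruhatLE x w)
    (hlen : cs.length x = cs.length w) : x = w := by
  obtain ⟨ω, hred, hπ, τ, hsub, hτ⟩ := h
  have h1 : cs.length x ≤ τ.length := by
    rw [← hτ]; exact cs.length_wordProd_le τ
  have h2 : ω.length = cs.length w := by rw [← hπ]; exact hred.symm
  have h3 : τ.length = ω.length := by
    have := hsub.length_le
    omega
  have : τ = ω := hsub.eq_of_length h3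
  rw [← hτ, this, hπ]

lemma bruhatLE_inv {x w : W} (h : cs.BruhatLE x w) : cs.BruhatLE x⁻¹ w⁻¹ := by
  obtain ⟨ω, hred, hπ, τ, hsub, hτ⟩ := h
  refine ⟨ω.reverse, (cs.isReduced_reverse_iff ω).mpr hred, ?_, τ.reverse, hsub.reverse, ?_⟩
  · rw [cs.wordProd_reverse, hπ]
  · rw [cs.wordProd_reverse, hτ]

/-! ### Parabolic subgroup lemmas -/

lemma exists_J_word (J : Set B) {x : W} (hx : x ∈ Subgroup.closure (cs.simple '' J)) :
    ∃ μ : List B, (∀ i ∈ μ, i ∈ J) ∧ cs.wordProd μ = x := by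
  induction hx using Subgroup.closure_induction with
  | mem y hy =>
    obtain ⟨i, hi, rfl⟩ := hy
    exact ⟨[i], by simpa using hi, cs.wordProd_singleton i⟩
  | one => exact ⟨[], by simp, cs.wordProd_nil⟩
  | mul y z _ _ ihy ihz =>
    obtain ⟨μ₁, h₁, hπ₁⟩ := ihy
    obtain ⟨μ₂, h₂, hπ₂⟩ := ihz
    refine ⟨μ₁ ++ μ₂, ?_, ?_⟩
    · intro i hi
      rcases List.mem_append.mp hi with h | h
      · exact h₁ i h
      · exact h₂ i h
    · rw [cs.wordProd_append, hπ₁, hπ₂]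
  | inv y _ ihy =>
    obtain ⟨μ, h₁, hπ⟩ := ihy
    exact ⟨μ.reverse, fun i hi => h₁ i (List.mem_reverse.mp hi),
      by rw [cs.wordProd_reverse, hπ]⟩

lemma wordProd_mem_closure (J : Set B) (μ : List B) (hμ : ∀ i ∈ μ, i ∈ J) :
    cs.wordProd μ ∈ Subgroup.closure (cs.simple '' J) := by
  induction μ with
  | nil => rw [cs.wordProd_nil]; exact one_mem _
  | cons i μ ih =>
    rw [cs.wordProd_cons]
    exact mul_mem (Subgroup.subset_closure ⟨i, hμ i (by simp), rfl⟩)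
      (ih fun j hj => hμ j (by simp [hj]))

lemma one_rle (w : W) : Rle cs 1 w := by
  have H : ∀ n (w : W), cs.length w ≤ n → Rle cs 1 w := by
    intro n
    induction n with
    | zero =>
      intro w hw
      have : w = 1 := cs.length_eq_zero_iff.mp (by omega)
      rw [this]
      exact Rle.refl cs 1
    | succ n ih =>
      intro w hw
      by_cases h1 : w = 1
      · rw [h1]; exact Rle.refl cs 1
      · obtain ⟨i, hdesc⟩ := cs.exists_rightDescent_of_ne_one h1
        have hdesc' : cs.length (w * cs.simple i) < cs.length w := hdesc
        have h2 : Rle cs 1 (w * cs.simple i) := ih _ (by omega)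
        exact h2.trans (rle_of_dstep cs (dstep_simple cs i hdesc'))
  exact H (cs.length w) w le_rfl

/-! ### The main lemma, one-sided version -/

lemma main_left (J : Set B)
    (hfin : (Subgroup.closure (cs.simple '' J) : Set W).Finite)
    (wJ : W) (hwJ : wJ ∈ Subgroup.closure (cs.simple '' J))
    (hlongest : ∀ x ∈ Subgroup.closure (cs.simple '' J), cs.length x ≤ cs.length wJ)
    (w d : W) (hd : cs.IsDemazureProd w wJ d) :
    (∃ x ∈ Subgroup.closure (cs.simple '' J), d = w * x) ∧
      ∀ y : W, (∃ x ∈ Subgroup.closure (cs.simple '' J), y = w * x) →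
        cs.length y ≤ cs.length d := by
  set K := Subgroup.closure (cs.simple '' J) with hK
  have hmem : ∀ y : W, (∃ a b : W, cs.BruhatLE a w ∧ cs.BruhatLE b wJ ∧ y = a * b) ↔
      cs.BruhatLE y d := fun y => Set.ext_iff.mp hd y
  have hsimple_mem : ∀ i ∈ J, cs.simple i ∈ K := fun i hi =>
    Subgroup.subset_closure ⟨i, hi, rfl⟩
  -- wJ dominates K in Bruhat order
  have hJdesc : ∀ i ∈ J, cs.length (wJ * cs.simple i) < cs.length wJ := fun i hi =>
    lt_of_le_of_ne (hlongest _ (mul_mem hwJ (hsimple_mem i hi)))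
      (cs.length_mul_simple_ne wJ i)
  have hle_wJ : ∀ x ∈ K, cs.BruhatLE x wJ := by
    intro x hx
    obtain ⟨μ, hμJ, hμπ⟩ := exists_J_word cs J hx
    have H : ∀ μ : List B, (∀ i ∈ μ, i ∈ J) → Rle cs (cs.wordProd μ) wJ := by
      intro μ
      induction μ using List.reverseRecOn with
      | nil => intro _; rw [cs.wordProd_nil]; exact one_rle cs wJ
      | append_singleton μ' i ih =>
        intro hall
        have h1 : Rle cs (cs.wordProd μ') wJ := ih fun j hj => hall j (by simp [hj])
        have h2 := lift_desc cs i (hJdesc i (hall i (by simp))) h1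
        rw [cs.wordProd_append, cs.wordProd_singleton]
        exact h2
    exact bruhatLE_of_rle cs (hμπ ▸ H μ hμJ)
  have maxpart : ∀ y : W, (∃ x ∈ K, y = w * x) → cs.BruhatLE y d := by
    rintro y ⟨x, hx, rfl⟩
    exact (hmem _).mp ⟨w, x, bruhatLE_refl cs w, hle_wJ x hx, rfl⟩
  -- N : maximal-length element of w·K
  obtain ⟨x₀, hx₀K, hx₀max⟩ := Set.Finite.exists_maximalFor
    (fun x => cs.length (w * x)) (K : Set W) hfin ⟨1, one_mem _⟩
  set N := w * x₀ with hN
  have hNmax : ∀ x ∈ K, cs.length (w * x) ≤ cs.length N := by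
    intro x hx
    by_contra hc
    push_neg at hc
    have : cs.length (w * x) ≤ cs.length N := hx₀max (j := x) hx (le_of_lt hc)
    omega
  have hNdesc : ∀ i ∈ J, cs.length (N * cs.simple i) < cs.length N := by
    intro i hi
    apply lt_of_le_of_ne _ (cs.length_mul_simple_ne N i)
    have h1 : x₀ * cs.simple i ∈ K := mul_mem hx₀K (hsimple_mem i hi)
    have := hNmax _ h1
    rwa [← mul_assoc] at this
  have hmulJ : ∀ μ : List B, (∀ i ∈ μ, i ∈ J) → ∀ a : W, Rle cs a N →
      Rle cs (a * cs.wordProd μ) N := by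
    intro μ
    induction μ using List.reverseRecOn with
    | nil => intro _ a ha; rw [cs.wordProd_nil, mul_one]; exact ha
    | append_singleton μ' i ih =>
      intro hall a ha
      have h1 := ih (fun j hj => hall j (by simp [hj])) a ha
      have h2 := lift_desc cs i (hNdesc i (hall i (by simp))) h1
      rw [cs.wordProd_append, cs.wordProd_singleton, ← mul_assoc]
      exact h2
  have hwN : Rle cs w N := by
    obtain ⟨μ, hμJ, hμπ⟩ := exists_J_word cs J (inv_mem hx₀K)
    have := hmulJ μ hμJ N (Rle.refl cs N)
    rw [hμπ, hN, mul_assoc, mul_inv_cancel, mul_one] at this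
    exact this
  -- d ≤ N
  obtain ⟨a, b, haw, hbwJ, hab⟩ := (hmem d).mpr (bruhatLE_refl cs d)
  obtain ⟨μJ, hμJJ, hμJπ⟩ := exists_J_word cs J hwJ
  obtain ⟨τ, hτsub, hτπ⟩ := rle_word cs b wJ (rle_of_bruhatLE cs hbwJ) μJ hμJπ
  have hbK : b ∈ K := by
    rw [← hτπ]
    exact wordProd_mem_closure cs J τ fun i hi => hμJJ i (hτsub.subset hi)
  have haN : Rle cs a N := (rle_of_bruhatLE cs haw).trans hwN
  obtain ⟨μb, hμbJ, hμbπ⟩ := exists_J_word cs J hbK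
  have hdN : cs.BruhatLE d N := by
    apply bruhatLE_of_rle cs
    rw [hab, ← hμbπ]
    exact hmulJ μb hμbJ a haN
  have hNd : cs.BruhatLE N d := maxpart N ⟨x₀, hx₀K, rfl⟩
  have hlen : cs.length d = cs.length N :=
    le_antisymm (bruhatLE_length_le cs hdN) (bruhatLE_length_le cs hNd)
  have hdeq : d = N := bruhatLE_eq_of_length cs hdN hlen
  exact ⟨⟨x₀, hx₀K, hdeq⟩, fun y hy => bruhatLE_length_le cs (maxpart y hy)⟩

end DemazureAux

/-- Let `W` be a Coxeter group, `J` a subset of the simple reflections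
generating a finite parabolic subgroup `W_J` with longest element `w_J`.  Then for every
`w ∈ W`, the Demazure product `w * w_J` is the longest element of the coset `w·W_J`, and
`w_J * w` is the longest element of `W_J·w`. -/
theorem demazure_longest_in_coset (cs : CoxeterSystem M W) (J : Set B)
    (hfin : (Subgroup.closure (cs.simple '' J) : Set W).Finite)
    (wJ : W) (hwJ : wJ ∈ Subgroup.closure (cs.simple '' J))
    (hlongest : ∀ x ∈ Subgroup.closure (cs.simple '' J), cs.length x ≤ cs.length wJ)
    (w : W) :
    (∀ d : W, cs.IsDemazureProd w wJ d →
      (∃ x ∈ Subgroup.closure (cs.simple '' J), d = w * x) ∧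
      ∀ y : W, (∃ x ∈ Subgroup.closure (cs.simple '' J), y = w * x) →
        cs.length y ≤ cs.length d) ∧
    (∀ e : W, cs.IsDemazureProd wJ w e →
      (∃ x ∈ Subgroup.closure (cs.simple '' J), e = x * w) ∧
      ∀ y : W, (∃ x ∈ Subgroup.closure (cs.simple '' J), y = x * w) →
        cs.length y ≤ cs.length e) := by
  constructor
  · intro d hd
    exact DemazureAux.main_left cs J hfin wJ hwJ hlongest w d hd
  · intro e he
    have hd' : cs.IsDemazureProd w⁻¹ wJ⁻¹ e⁻¹ := by
      have h₁ := fun y => Set.ext_iff.mp he y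
      apply Set.ext
      intro x
      simp only [Set.mem_setOf_eq]
      constructor
      · rintro ⟨a, b, ha, hb, rfl⟩
        have h2 : cs.BruhatLE (b⁻¹ * a⁻¹) e := (h₁ (b⁻¹ * a⁻¹)).mp
          ⟨b⁻¹, a⁻¹, by simpa using DemazureAux.bruhatLE_inv cs hb,
            by simpa using DemazureAux.bruhatLE_inv cs ha, rfl⟩
        have := DemazureAux.bruhatLE_inv cs h2
        simpa using this
      · intro hx
        have h2 : cs.BruhatLE x⁻¹ e := by
          simpa using DemazureAux.bruhatLE_inv cs hx
        obtain ⟨a, b, ha, hb, hab⟩ := (h₁ x⁻¹).mpr h2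
        refine ⟨b⁻¹, a⁻¹, DemazureAux.bruhatLE_inv cs hb, DemazureAux.bruhatLE_inv cs ha, ?_⟩
        rw [← mul_inv_rev, ← hab, inv_inv]
    have h := DemazureAux.main_left cs J hfin wJ⁻¹ (inv_mem hwJ)
      (fun x hx => by rw [cs.length_inv]; exact hlongest x hx) w⁻¹ e⁻¹ hd'
    obtain ⟨⟨x, hxK, hex⟩, hmax⟩ := h
    constructor
    · refine ⟨x⁻¹, inv_mem hxK, ?_⟩
      have : e⁻¹ = w⁻¹ * x := hex
      calc e = (e⁻¹)⁻¹ := by rw [inv_inv]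
        _ = (w⁻¹ * x)⁻¹ := by rw [this]
        _ = x⁻¹ * w := by rw [mul_inv_rev, inv_inv]
    · rintro y ⟨x', hx', rfl⟩
      have h1 : cs.length ((x' * w)⁻¹) ≤ cs.length (e⁻¹) := by
        apply hmax
        exact ⟨x'⁻¹, inv_mem hx', by rw [mul_inv_rev]⟩
      rwa [cs.length_inv, cs.length_inv] at h1
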